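/- Let κ be a regular cardinal, μ a (κ,κ⁺)-cardinal, and m the μ-coloring. Then the tree T = {m(·,α)↾β : β < α < κ⁺} of restricted functions ordered by extension is a κ⁺-Aronszajn tree: it has height κ⁺, every level has cardinality at most κ, and it has no branch of length κ⁺. -/

import Mathlib

open Set Cardinal Ordinal

noncomputable section

/-- Lower a (small) ordinal of `Ordinal.{1}` to `Ordinal.{0}` (the inverse of `Ordinal.lift`
on its range). -/
noncomputable def olower (o : Ordinal.{1}) : Ordinal.{0} :=
  sInf {a : Ordinal.{0} | Ordinal.lift.{1} a = o}

/-- The order type of a set of ordinals. -/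
noncomputable def otp (A : Set Ordinal.{0}) : Ordinal.{0} :=
  olower (Ordinal.type (Subrel ((· < ·) : Ordinal → Ordinal → Prop) (· ∈ A)))

/-- The canonical order-preserving transfer map from a set of ordinals `X` to a set of
ordinals `Y` of the same order type: an element `a ∈ X` is sent to the unique element of `Y`
occupying the same position. -/
noncomputable def omap (X Y : Set Ordinal) (a : Ordinal) : Ordinal :=
  sInf {b | b ∈ Y ∧ otp (Y ∩ Set.Iio b) = otp (X ∩ Set.Iio a)}

/-- `IsStar X₁ X₂ X` says `X = X₁ * X₂`: `X₁` and `X₂` have the same order type,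
`X = X₁ ∪ X₂`, and `X₁ ∩ X₂ < X₁ \ X₂ < X₂ \ X₁` elementwise. -/
def IsStar (X₁ X₂ X : Set Ordinal) : Prop :=
  otp X₁ = otp X₂ ∧ X = X₁ ∪ X₂ ∧
  (∀ a ∈ X₁ ∩ X₂, ∀ b ∈ X₁ \ X₂, a < b) ∧
  (∀ b ∈ X₁ \ X₂, ∀ c ∈ X₂ \ X₁, b < c)

set_option linter.deprecated false in
/-- A `(κ,κ⁺)`-cardinal (a neat simplified `(κ,1)`-morass presented as a family of sets):
a family `μ ⊆ ℘_κ(κ⁺)` which is well-founded under strict inclusion, locally small,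
homogeneous, directed, locally almost directed, covers `κ⁺` and is neat. -/
structure TwoCardinal (κ : Cardinal.{0}) where
  mu : Set (Set Ordinal)
  mem_sub : ∀ X ∈ mu, X ⊆ Set.Iio (Order.succ κ).ord
  mem_small : ∀ X ∈ mu, (otp X).card < κ
  wf : WellFounded fun X Y : mu => (X : Set Ordinal) ⊂ (Y : Set Ordinal)
  locSmall : ∀ X : mu,
    #{Z : mu // (Z : Set Ordinal) ⊂ (X : Set Ordinal)} < Cardinal.lift.{1} κ
  homog : ∀ X Y : mu, (wf.apply X).rank = (wf.apply Y).rank →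
    otp (X : Set Ordinal) = otp (Y : Set Ordinal) ∧
    {Z | Z ∈ mu ∧ Z ⊂ (Y : Set Ordinal)} =
      (fun Z => omap (X : Set Ordinal) (Y : Set Ordinal) '' Z) ''
        {Z | Z ∈ mu ∧ Z ⊂ (X : Set Ordinal)}
  directed : ∀ X ∈ mu, ∀ Y ∈ mu, ∃ Z ∈ mu, X ⊆ Z ∧ Y ⊆ Z
  locAlmostDirected : ∀ X : mu,
    (∀ Z₁ ∈ mu, ∀ Z₂ ∈ mu, Z₁ ⊂ (X : Set Ordinal) → Z₂ ⊂ (X : Set Ordinal) →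
      ∃ Z ∈ mu, Z ⊂ (X : Set Ordinal) ∧ Z₁ ⊆ Z ∧ Z₂ ⊆ Z) ∨
    (∃ X₁ X₂ : mu, (wf.apply X₁).rank = (wf.apply X₂).rank ∧
      IsStar (X₁ : Set Ordinal) (X₂ : Set Ordinal) (X : Set Ordinal) ∧
      {Z | Z ∈ mu ∧ Z ⊂ (X : Set Ordinal)} =
        {Z | Z ∈ mu ∧ Z ⊂ (X₁ : Set Ordinal)} ∪ {Z | Z ∈ mu ∧ Z ⊂ (X₂ : Set Ordinal)} ∪
          {(X₁ : Set Ordinal), (X₂ : Set Ordinal)})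
  covers : ⋃₀ mu = Set.Iio (Order.succ κ).ord
  neat : ∀ X : mu, (wf.apply X).rank ≠ 0 →
    (X : Set Ordinal) = ⋃₀ {Z | Z ∈ mu ∧ Z ⊂ (X : Set Ordinal)}

namespace TwoCardinal

variable {κ : Cardinal} (M : TwoCardinal κ)

set_option linter.deprecated false in
/-- The rank of an element of `μ` in the well-founded order `(μ, ⊂)`. -/
noncomputable def rank (X : M.mu) : Ordinal := olower ((M.wf.apply X).rank)

/-- The height of the well-founded order `(μ, ⊂)`. -/
noncomputable def ht : Ordinal := sSup (Set.range fun X : M.mu => M.rank X + 1)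

/-- The term `μ_ξ(α)` of the μ-sequence at `α`: equal to `X ∩ α` for any `X ∈ μ` of
rank `ξ` containing `α` (this is independent of the choice of `X`). -/
noncomputable def seq (α ξ : Ordinal) : Set Ordinal :=
  ⋃₀ {S | ∃ X : M.mu, M.rank X = ξ ∧ α ∈ (X : Set Ordinal) ∧
    S = (X : Set Ordinal) ∩ Set.Iio α}

/-- The μ-coloring `m(α,β) = min{rank X : α, β ∈ X ∈ μ}`. -/
noncomputable def mcol (a b : Ordinal) : Ordinal :=
  sInf {ξ | ∃ X : M.mu, M.rank X = ξ ∧ a ∈ (X : Set Ordinal) ∧ b ∈ (X : Set Ordinal)}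

end TwoCardinal

/-- the rank function of a well-founded relation -/
noncomputable def WellFounded.rank {α : Type*} {r : α → α → Prop} (hwf : WellFounded r) (a : α) :
    Ordinal := (hwf.apply a).rank

theorem WellFounded.rank_eq {α : Type*} {r : α → α → Prop} (hwf : WellFounded r) (a : α) :
    hwf.rank a = ⨆ b : { b // r b a }, Order.succ (hwf.rank b) :=
  (hwf.apply a).rank_eq

theorem WellFounded.rank_lt_of_rel {α : Type*} {r : α → α → Prop} (hwf : WellFounded r)
    {a b : α} (h : r a b) : hwf.rank a < hwf.rank b :=
  Acc.rank_lt_of_rel _ h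

/-- order type in the upper universe -/
noncomputable abbrev oType (A : Set Ordinal.{0}) : Ordinal.{1} :=
  Ordinal.type (Subrel ((· < ·) : Ordinal → Ordinal → Prop) (· ∈ A))

theorem olower_lift (x : Ordinal.{0}) : olower (Ordinal.lift.{1} x) = x := by
  have : {a : Ordinal.{0} | Ordinal.lift.{1} a = Ordinal.lift.{1} x} = {x} := by
    ext a; simp [Ordinal.lift_inj]
  rw [olower, this, csInf_singleton]

theorem oType_le_oType_of_subset {A B : Set Ordinal.{0}} (h : A ⊆ B) : oType A ≤ oType B := by
  refine RelEmbedding.ordinal_type_le ⟨⟨fun x => ⟨x.1, h x.2⟩, ?_⟩, ?_⟩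
  · intro x y hxy; simpa [Subtype.ext_iff] using congrArg Subtype.val hxy
  · intro x y; exact Iff.rfl

theorem oType_Iio (c : Ordinal.{0}) : oType (Set.Iio c) = Ordinal.lift.{1} c := by
  exact (Ordinal.type_subrel ((· < ·) : Ordinal → Ordinal → Prop) c).trans (typein_ordinal c)

theorem lift_otp {A : Set Ordinal.{0}} {c : Ordinal.{0}} (h : A ⊆ Set.Iio c) :
    Ordinal.lift.{1} (otp A) = oType A := by
  have h1 : oType A ≤ Ordinal.lift.{1} c := by
    rw [← oType_Iio]; exact oType_le_oType_of_subset h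
  obtain ⟨x, hx⟩ := Ordinal.mem_range_lift_of_le h1
  show Ordinal.lift.{1} (olower (oType A)) = oType A
  rw [← hx, olower_lift]

/-- the iso between `B ∩ Iio a` and the initial segment of `B` below `a`. -/
theorem oType_inter_Iio {B : Set Ordinal.{0}} {a : Ordinal} (ha : a ∈ B) :
    oType (B ∩ Set.Iio a) =
      typein (Subrel ((· < ·) : Ordinal → Ordinal → Prop) (· ∈ B)) ⟨a, ha⟩ := by
  rw [← Ordinal.type_subrel]
  refine RelIso.ordinal_type_eq ?_
  refine ⟨⟨fun x => ⟨⟨x.1, x.2.1⟩, x.2.2⟩, fun y => ⟨y.1.1, y.1.2, y.2⟩, ?_, ?_⟩, ?_⟩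
  · intro x; rfl
  · intro y; rfl
  · intro x y; exact Iff.rfl

theorem oType_inter_lt {B : Set Ordinal.{0}} {a : Ordinal} (ha : a ∈ B) :
    oType (B ∩ Set.Iio a) < oType B := by
  rw [oType_inter_Iio ha]; exact typein_lt_type _ _

theorem oType_inter_lt_inter {B : Set Ordinal.{0}} {a b : Ordinal} (ha : a ∈ B) (hb : b ∈ B)
    (hab : a < b) : oType (B ∩ Set.Iio a) < oType (B ∩ Set.Iio b) := by
  rw [oType_inter_Iio ha, oType_inter_Iio hb]
  exact (typein_lt_typein _).2 hab

theorem oType_inter_inj {B : Set Ordinal.{0}} {a b : Ordinal} (ha : a ∈ B) (hb : b ∈ B)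
    (h : oType (B ∩ Set.Iio a) = oType (B ∩ Set.Iio b)) : a = b := by
  rcases lt_trichotomy a b with hc | hc | hc
  · exact absurd h (oType_inter_lt_inter ha hb hc).ne
  · exact hc
  · exact absurd h.symm (oType_inter_lt_inter hb ha hc).ne

theorem oType_inter_surj {B : Set Ordinal.{0}} {o : Ordinal.{1}} (h : o < oType B) :
    ∃ b ∈ B, oType (B ∩ Set.Iio b) = o := by
  obtain ⟨⟨b, hb⟩, hb'⟩ := typein_surj (Subrel ((· < ·) : Ordinal → Ordinal → Prop) (· ∈ B)) h
  exact ⟨b, hb, by rw [oType_inter_Iio hb, hb']⟩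

theorem otp_eq_otp {X Y : Set Ordinal.{0}} {c : Ordinal} (hX : X ⊆ Set.Iio c)
    (hY : Y ⊆ Set.Iio c) : otp X = otp Y ↔ oType X = oType Y := by
  rw [← Ordinal.lift_inj (a := otp X), lift_otp hX, lift_otp hY]

theorem omap_eq_of {X Y : Set Ordinal.{0}} {c : Ordinal} (hX : X ⊆ Set.Iio c)
    (hY : Y ⊆ Set.Iio c) {a b : Ordinal} (hb : b ∈ Y)
    (hab : oType (Y ∩ Set.Iio b) = oType (X ∩ Set.Iio a)) : omap X Y a = b := by
  have hset : {b' | b' ∈ Y ∧ otp (Y ∩ Set.Iio b') = otp (X ∩ Set.Iio a)} = {b} := by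
    ext b'
    simp only [Set.mem_setOf_eq, Set.mem_singleton_iff]
    constructor
    · rintro ⟨hb', he⟩
      rw [otp_eq_otp (Set.inter_subset_left.trans hY) (Set.inter_subset_left.trans hX)] at he
      exact oType_inter_inj hb' hb (he.trans hab.symm)
    · rintro rfl
      refine ⟨hb, ?_⟩
      rw [otp_eq_otp (Set.inter_subset_left.trans hY) (Set.inter_subset_left.trans hX)]
      exact hab
  rw [omap, hset, csInf_singleton]

theorem omap_spec {X Y : Set Ordinal.{0}} {c : Ordinal} (hX : X ⊆ Set.Iio c)
    (hY : Y ⊆ Set.Iio c) (hXY : oType X = oType Y) {a : Ordinal} (ha : a ∈ X) :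
    omap X Y a ∈ Y ∧ oType (Y ∩ Set.Iio (omap X Y a)) = oType (X ∩ Set.Iio a) := by
  obtain ⟨b, hb, hb2⟩ := oType_inter_surj (B := Y) (o := oType (X ∩ Set.Iio a))
    (by rw [← hXY]; exact oType_inter_lt ha)
  rw [omap_eq_of hX hY hb hb2]
  exact ⟨hb, hb2⟩

theorem omap_inj {X Y : Set Ordinal.{0}} {c : Ordinal} (hX : X ⊆ Set.Iio c)
    (hY : Y ⊆ Set.Iio c) (hXY : oType X = oType Y) {a a' : Ordinal} (ha : a ∈ X)
    (ha' : a' ∈ X) (h : omap X Y a = omap X Y a') : a = a' := by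
  have h1 := omap_spec hX hY hXY ha
  have h2 := omap_spec hX hY hXY ha'
  rw [h] at h1
  exact oType_inter_inj ha ha' (h1.2.symm.trans h2.2)

theorem omap_fixes {X Y : Set Ordinal.{0}} {c : Ordinal} (hX : X ⊆ Set.Iio c)
    (hY : Y ⊆ Set.Iio c) {a : Ordinal} (haY : a ∈ Y)
    (he : X ∩ Set.Iio a = Y ∩ Set.Iio a) : omap X Y a = a :=
  omap_eq_of hX hY haY (by rw [he])

theorem image_subset_of_omap {X Y : Set Ordinal.{0}} {c : Ordinal} (hX : X ⊆ Set.Iio c)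
    (hY : Y ⊆ Set.Iio c) (hXY : oType X = oType Y) {Z Z' : Set Ordinal}
    (hZ : Z ⊆ X) (hZ' : Z' ⊆ X) (h : omap X Y '' Z ⊆ omap X Y '' Z') : Z ⊆ Z' := by
  intro z hz
  obtain ⟨z', hz', he⟩ := h ⟨z, hz, rfl⟩
  rwa [← omap_inj hX hY hXY (hZ' hz') (hZ hz) he]


theorem IsStar.common_Iio {A B C : Set Ordinal} (h : IsStar A B C) (hAB : ¬A ⊆ B)
    {a : Ordinal} (ha : a ∈ A ∩ B) : A ∩ Set.Iio a = B ∩ Set.Iio a := by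
  obtain ⟨-, -, h1, h2⟩ := h
  ext x
  constructor
  · rintro ⟨hxA, hxa⟩
    refine ⟨?_, hxa⟩
    by_contra hxB
    exact absurd hxa (not_lt.2 (h1 a ha x ⟨hxA, hxB⟩).le)
  · rintro ⟨hxB, hxa⟩
    refine ⟨?_, hxa⟩
    by_contra hxA
    obtain ⟨w, hw⟩ := not_subset.1 hAB
    exact absurd hxa (not_lt.2 ((h1 a ha w hw).trans (h2 w hw x ⟨hxB, hxA⟩)).le)

/-- the common part of a (nondegenerate) star is an initial segment of each side -/
theorem IsStar.inter_Iio_subset {A B C : Set Ordinal} (h : IsStar A B C)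
    {a : Ordinal} (ha : a ∈ A ∩ B) : A ∩ Set.Iio a ⊆ A ∩ B := by
  rintro x ⟨hxA, hxa⟩
  refine ⟨hxA, ?_⟩
  by_contra hxB
  exact absurd hxa (not_lt.2 (h.2.2.1 a ha x ⟨hxA, hxB⟩).le)


namespace TwoCardinal

variable {κ : Cardinal} (M : TwoCardinal κ)

set_option linter.deprecated false


theorem rank_lt_of_ssub {X Y : M.mu} (h : (X : Set Ordinal) ⊂ (Y : Set Ordinal)) :
    M.wf.rank X < M.wf.rank Y :=
  M.wf.rank_lt_of_rel h

theorem rank_mono {X Y : M.mu} (h : (X : Set Ordinal) ⊆ (Y : Set Ordinal)) :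
    M.wf.rank X ≤ M.wf.rank Y := by
  by_cases he : (X : Set Ordinal) = (Y : Set Ordinal)
  · rw [Subtype.ext he]
  · exact (M.rank_lt_of_ssub (ssubset_of_subset_of_ne h he)).le

theorem exists_pred_rank {X : M.mu} {ν : Ordinal.{1}} (h : ν < M.wf.rank X) :
    ∃ Z : M.mu, (Z : Set Ordinal) ⊂ (X : Set Ordinal) ∧ ν ≤ M.wf.rank Z := by
  rw [M.wf.rank_eq] at h
  obtain ⟨⟨Z, hZ⟩, h'⟩ := Ordinal.lt_iSup_iff.1 h
  exact ⟨Z, hZ, Order.lt_succ_iff.1 h'⟩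

variable (hκ : κ.IsRegular)
include hκ

theorem rank_bound : ∀ X : M.mu, M.wf.rank X < (Cardinal.lift.{1} κ).ord := by
  have hcof : ((Cardinal.lift.{1} κ).ord).cof = Cardinal.lift.{1} κ := by
    rw [← Cardinal.lift_ord.{1,0}, ← Ordinal.lift_cof, hκ.cof_eq]
  have hlim : Order.IsSuccLimit ((Cardinal.lift.{1} κ).ord) :=
    Cardinal.isSuccLimit_ord (by rw [← Cardinal.lift_aleph0.{1,0}]; exact Cardinal.lift_le.2 hκ.aleph0_le)
  intro X
  refine M.wf.induction (C := fun X => M.wf.rank X < (Cardinal.lift.{1} κ).ord) X ?_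
  intro Y IH
  rw [M.wf.rank_eq]
  refine Ordinal.iSup_lt_ord (by rw [hcof]; exact M.locSmall Y) ?_
  rintro ⟨Z, hZ⟩
  exact hlim.succ_lt (IH Z hZ)

theorem lift_rank (X : M.mu) : Ordinal.lift.{1} (M.rank X) = M.wf.rank X := by
  obtain ⟨x, hx⟩ := Ordinal.mem_range_lift_of_le (b := M.wf.rank X)
    (by rw [Cardinal.lift_ord.{1,0}]; exact (M.rank_bound hκ X).le)
  rw [rank, show (M.wf.apply X).rank = M.wf.rank X from rfl, ← hx, olower_lift]

theorem rank_lt_ord (X : M.mu) : M.rank X < κ.ord := by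
  rw [← Ordinal.lift_lt.{1}, M.lift_rank hκ, Cardinal.lift_ord.{1,0}]
  exact M.rank_bound hκ X

theorem rank_le_rank_iff {X Y : M.mu} : M.rank X ≤ M.rank Y ↔ M.wf.rank X ≤ M.wf.rank Y := by
  rw [← Ordinal.lift_le.{1}, M.lift_rank hκ, M.lift_rank hκ]

theorem rank_eq_rank_iff {X Y : M.mu} : M.rank X = M.rank Y ↔ M.wf.rank X = M.wf.rank Y := by
  rw [← Ordinal.lift_inj.{1}, M.lift_rank hκ, M.lift_rank hκ]

theorem rank_lt_rank_iff {X Y : M.mu} : M.rank X < M.rank Y ↔ M.wf.rank X < M.wf.rank Y := by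
  rw [← Ordinal.lift_lt.{1}, M.lift_rank hκ, M.lift_rank hκ]

end TwoCardinal

namespace TwoCardinal

variable {κ : Cardinal} (M : TwoCardinal κ)

set_option linter.deprecated false

theorem sub_delta (X : M.mu) : (X : Set Ordinal) ⊆ Set.Iio (Order.succ κ).ord :=
  M.mem_sub X.1 X.2

section Transfer

variable {X₁ X₂ : M.mu}

theorem oType_eq (hr : M.wf.rank X₁ = M.wf.rank X₂) :
    oType (X₁ : Set Ordinal) = oType (X₂ : Set Ordinal) :=
  (otp_eq_otp (M.sub_delta X₁) (M.sub_delta X₂)).1 (M.homog _ _ hr).1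

theorem image_mem (hr : M.wf.rank X₁ = M.wf.rank X₂) {Z : Set Ordinal}
    (hZ : Z ∈ M.mu ∧ Z ⊂ (X₁ : Set Ordinal)) :
    omap (X₁ : Set Ordinal) X₂ '' Z ∈ M.mu ∧
      omap (X₁ : Set Ordinal) X₂ '' Z ⊂ (X₂ : Set Ordinal) := by
  have h := (M.homog _ _ hr).2
  have : omap (X₁ : Set Ordinal) X₂ '' Z ∈
      {W | W ∈ M.mu ∧ W ⊂ (X₂ : Set Ordinal)} := by
    rw [h]; exact ⟨Z, hZ, rfl⟩
  exact this

theorem image_preimage (hr : M.wf.rank X₁ = M.wf.rank X₂) {W : Set Ordinal}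
    (hW : W ∈ M.mu ∧ W ⊂ (X₂ : Set Ordinal)) :
    ∃ Z : Set Ordinal, (Z ∈ M.mu ∧ Z ⊂ (X₁ : Set Ordinal)) ∧
      omap (X₁ : Set Ordinal) X₂ '' Z = W := by
  have h := (M.homog _ _ hr).2
  have : W ∈ (fun Z => omap (X₁ : Set Ordinal) (X₂ : Set Ordinal) '' Z) ''
      {Z | Z ∈ M.mu ∧ Z ⊂ (X₁ : Set Ordinal)} := h ▸ hW
  obtain ⟨Z, hZ, hZW⟩ := this
  exact ⟨Z, hZ, hZW⟩

theorem image_ssub_iff (hr : M.wf.rank X₁ = M.wf.rank X₂) {Z Z' : Set Ordinal}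
    (hZ : Z ⊆ (X₁ : Set Ordinal)) (hZ' : Z' ⊆ (X₁ : Set Ordinal)) :
    omap (X₁ : Set Ordinal) X₂ '' Z ⊆ omap (X₁ : Set Ordinal) X₂ '' Z' ↔ Z ⊆ Z' := by
  constructor
  · exact image_subset_of_omap (M.sub_delta X₁) (M.sub_delta X₂) (M.oType_eq hr) hZ hZ'
  · exact Set.image_mono

theorem image_inj (hr : M.wf.rank X₁ = M.wf.rank X₂) {Z Z' : Set Ordinal}
    (hZ : Z ⊆ (X₁ : Set Ordinal)) (hZ' : Z' ⊆ (X₁ : Set Ordinal))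
    (h : omap (X₁ : Set Ordinal) X₂ '' Z = omap (X₁ : Set Ordinal) X₂ '' Z') : Z = Z' :=
  subset_antisymm ((M.image_ssub_iff hr hZ hZ').1 h.le)
    ((M.image_ssub_iff hr hZ' hZ).1 h.ge)

theorem rank_image (hr : M.wf.rank X₁ = M.wf.rank X₂) :
    ∀ Z : M.mu, (Z : Set Ordinal) ⊂ (X₁ : Set Ordinal) →
      ∀ hW : omap (X₁ : Set Ordinal) X₂ '' (Z : Set Ordinal) ∈ M.mu,
        M.wf.rank (⟨_, hW⟩ : M.mu) = M.wf.rank Z := by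
  intro Z
  refine M.wf.induction (C := fun Z => (Z : Set Ordinal) ⊂ (X₁ : Set Ordinal) →
    ∀ hW : omap (X₁ : Set Ordinal) X₂ '' (Z : Set Ordinal) ∈ M.mu,
      M.wf.rank (⟨_, hW⟩ : M.mu) = M.wf.rank Z) Z ?_
  clear Z; intro Z IH hZ hW
  have himg := M.image_mem hr ⟨Z.2, hZ⟩
  apply le_antisymm
  · rw [M.wf.rank_eq (a := (⟨_, hW⟩ : M.mu))]
    refine Ordinal.iSup_le_iff.2 ?_
    rintro ⟨W', hW'⟩
    have hW'X₂ : (W' : Set Ordinal) ⊂ (X₂ : Set Ordinal) := hW'.trans himg.2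
    obtain ⟨Z', hZ', hZW'⟩ := M.image_preimage hr ⟨W'.2, hW'X₂⟩
    have hZ'Z : Z' ⊂ (Z : Set Ordinal) := by
      refine ssubset_of_subset_of_ne ?_ ?_
      · exact (M.image_ssub_iff hr hZ'.2.subset hZ.subset).1 (hZW' ▸ hW'.subset)
      · rintro rfl
        exact hW'.ne (hZW'.symm)
    have hrk := IH ⟨Z', hZ'.1⟩ hZ'Z hZ'.2 (hZW' ▸ W'.2)
    rw [Order.succ_le_iff]
    calc M.wf.rank W' = M.wf.rank ⟨Z', hZ'.1⟩ := by
          rw [← hrk]; congr 1; exact Subtype.ext hZW'.symm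
      _ < M.wf.rank Z := M.rank_lt_of_ssub hZ'Z
  · rw [M.wf.rank_eq (a := Z)]
    refine Ordinal.iSup_le_iff.2 ?_
    rintro ⟨Z', hZ'⟩
    have hZ'X₁ : (Z' : Set Ordinal) ⊂ (X₁ : Set Ordinal) := hZ'.trans hZ
    have himg' := M.image_mem hr ⟨Z'.2, hZ'X₁⟩
    have hss : omap (X₁ : Set Ordinal) X₂ '' (Z' : Set Ordinal) ⊂
        omap (X₁ : Set Ordinal) X₂ '' (Z : Set Ordinal) := by
      refine ssubset_of_subset_of_ne (Set.image_mono hZ'.subset) ?_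
      intro h
      exact hZ'.ne (M.image_inj hr hZ'X₁.subset hZ.subset h)
    have hrk := IH Z' hZ' hZ'X₁ himg'.1
    rw [Order.succ_le_iff, ← hrk]
    exact M.rank_lt_of_ssub (X := ⟨_, himg'.1⟩) (Y := ⟨_, hW⟩) hss

end Transfer

end TwoCardinal

namespace TwoCardinal

variable {κ : Cardinal} (M : TwoCardinal κ)

set_option linter.deprecated false

theorem coh_mixed_aux (P Q : M.mu) (hrPQ : M.wf.rank P = M.wf.rank Q)
    (hcommon : ∀ a ∈ (P : Set Ordinal) ∩ (Q : Set Ordinal),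
      (P : Set Ordinal) ∩ Set.Iio a = (Q : Set Ordinal) ∩ Set.Iio a)
    (hIH : ∀ X Y : M.mu, (X : Set Ordinal) ⊆ (P : Set Ordinal) →
      (Y : Set Ordinal) ⊆ (P : Set Ordinal) → M.wf.rank X ≤ M.wf.rank Y →
      ∀ α, α ∈ (X : Set Ordinal) → α ∈ (Y : Set Ordinal) →
        (X : Set Ordinal) ∩ Set.Iio α ⊆ (Y : Set Ordinal))
    (X Y : M.mu) (hXP : (X : Set Ordinal) ⊆ (P : Set Ordinal))
    (hYQ : (Y : Set Ordinal) ⊆ (Q : Set Ordinal)) (hXY : M.wf.rank X ≤ M.wf.rank Y)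
    {α : Ordinal} (hαX : α ∈ (X : Set Ordinal)) (hαY : α ∈ (Y : Set Ordinal)) :
    (X : Set Ordinal) ∩ Set.Iio α ⊆ (Y : Set Ordinal) := by
  have hα : α ∈ (P : Set Ordinal) ∩ (Q : Set Ordinal) := ⟨hXP hαX, hYQ hαY⟩
  have hcomα := hcommon α hα
  by_cases hYQ' : (Y : Set Ordinal) = (Q : Set Ordinal)
  · intro x hx
    have : x ∈ (Q : Set Ordinal) ∩ Set.Iio α := hcomα ▸ (⟨hXP hx.1, hx.2⟩ :
      x ∈ (P : Set Ordinal) ∩ Set.Iio α)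
    rw [hYQ']
    exact this.1
  · have hYss : (Y : Set Ordinal) ⊂ (Q : Set Ordinal) := ssubset_of_subset_of_ne hYQ hYQ'
    obtain ⟨Y₀, hY₀, hY₀img⟩ := M.image_preimage hrPQ ⟨Y.2, hYss⟩
    have hfα : omap (P : Set Ordinal) (Q : Set Ordinal) α = α :=
      omap_fixes (M.sub_delta P) (M.sub_delta Q) hα.2 hcomα
    have hαY₀ : α ∈ Y₀ := by
      have hmem : α ∈ omap (P : Set Ordinal) (Q : Set Ordinal) '' Y₀ := hY₀img.symm ▸ hαY
      obtain ⟨y₀, hy₀, hy₀e⟩ := hmem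
      have : y₀ = α := omap_inj (M.sub_delta P) (M.sub_delta Q) (M.oType_eq hrPQ)
        (hY₀.2.subset hy₀) hα.1 (by rw [hy₀e, hfα])
      exact this ▸ hy₀
    have hrkY₀ : M.wf.rank (⟨Y₀, hY₀.1⟩ : M.mu) = M.wf.rank Y := by
      have h1 := M.rank_image hrPQ ⟨Y₀, hY₀.1⟩ hY₀.2 (hY₀img ▸ Y.2)
      have h2 : (⟨omap (P : Set Ordinal) (Q : Set Ordinal) '' Y₀, hY₀img ▸ Y.2⟩ : M.mu) = Y :=
        Subtype.ext hY₀img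
      exact h2 ▸ h1.symm
    have hsub := hIH X ⟨Y₀, hY₀.1⟩ hXP hY₀.2.subset (hXY.trans_eq hrkY₀.symm) α hαX hαY₀
    intro x hx
    have hx0 : x ∈ Y₀ := hsub hx
    have hxPα : x ∈ (P : Set Ordinal) ∩ Set.Iio α := ⟨hY₀.2.subset hx0, hx.2⟩
    have hxQα : x ∈ (Q : Set Ordinal) ∩ Set.Iio α := hcomα ▸ hxPα
    have hfx : omap (P : Set Ordinal) (Q : Set Ordinal) x = x :=
      omap_fixes (M.sub_delta P) (M.sub_delta Q) hxQα.1 (hcommon x ⟨hxPα.1, hxQα.1⟩)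
    have hmem : omap (P : Set Ordinal) (Q : Set Ordinal) x ∈
        omap (P : Set Ordinal) (Q : Set Ordinal) '' Y₀ := ⟨x, hx0, rfl⟩
    rw [hfx, hY₀img] at hmem
    exact hmem

end TwoCardinal

namespace TwoCardinal

variable {κ : Cardinal} (M : TwoCardinal κ)

set_option linter.deprecated false

theorem coh_bounded : ∀ o : Ordinal.{1}, ∀ W X Y : M.mu, M.wf.rank W = o →
    (X : Set Ordinal) ⊆ (W : Set Ordinal) → (Y : Set Ordinal) ⊆ (W : Set Ordinal) →
    M.wf.rank X ≤ M.wf.rank Y →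
    ∀ α, α ∈ (X : Set Ordinal) → α ∈ (Y : Set Ordinal) →
      (X : Set Ordinal) ∩ Set.Iio α ⊆ (Y : Set Ordinal) := by
  intro o
  induction o using Ordinal.induction with
  | _ o IH =>
  intro W X Y hrank hXW hYW hXY α hαX hαY
  by_cases hYW' : (Y : Set Ordinal) = (W : Set Ordinal)
  · intro x hx
    rw [hYW']
    exact hXW hx.1
  have hY : (Y : Set Ordinal) ⊂ (W : Set Ordinal) := ssubset_of_subset_of_ne hYW hYW'
  by_cases hXW' : (X : Set Ordinal) = (W : Set Ordinal)
  · exact absurd ((M.rank_lt_of_ssub hY).trans_le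
      ((congrArg M.wf.rank (Subtype.ext hXW')).ge.trans hXY))
      (lt_irrefl _)
  have hX : (X : Set Ordinal) ⊂ (W : Set Ordinal) := ssubset_of_subset_of_ne hXW hXW'
  rcases M.locAlmostDirected W with hdir | ⟨X₁, X₂, hr12, hstar, hpredeq⟩
  · obtain ⟨Z, hZmu, hZW, hXZ, hYZ⟩ := hdir X.val X.2 Y.val Y.2 hX hY
    exact IH (M.wf.rank ⟨Z, hZmu⟩) (hrank ▸ M.rank_lt_of_ssub (Y := W) hZW)
      ⟨Z, hZmu⟩ X Y rfl hXZ hYZ hXY α hαX hαY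
  · have hX₁W : (X₁ : Set Ordinal) ⊂ (W : Set Ordinal) := by
      have : (X₁ : Set Ordinal) ∈ {Z | Z ∈ M.mu ∧ Z ⊂ (W : Set Ordinal)} := by
        rw [hpredeq]; exact Or.inr (Set.mem_insert _ _)
      exact this.2
    have hX₂W : (X₂ : Set Ordinal) ⊂ (W : Set Ordinal) := by
      have : (X₂ : Set Ordinal) ∈ {Z | Z ∈ M.mu ∧ Z ⊂ (W : Set Ordinal)} := by
        rw [hpredeq]; exact Or.inr (Set.mem_insert_iff.2 (Or.inr rfl))
      exact this.2
    have hne₁₂ : ¬(X₁ : Set Ordinal) ⊆ (X₂ : Set Ordinal) := by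
      intro h
      by_cases he : (X₁ : Set Ordinal) = (X₂ : Set Ordinal)
      · have : (W : Set Ordinal) = (X₁ : Set Ordinal) := by
          rw [hstar.2.1, ← he, Set.union_self]
        exact hX₁W.ne (this.symm)
      · exact absurd hr12 (M.rank_lt_of_ssub (ssubset_of_subset_of_ne h he)).ne
    have hne₂₁ : ¬(X₂ : Set Ordinal) ⊆ (X₁ : Set Ordinal) := by
      intro h
      by_cases he : (X₂ : Set Ordinal) = (X₁ : Set Ordinal)
      · have : (W : Set Ordinal) = (X₁ : Set Ordinal) := by
          rw [hstar.2.1, he, Set.union_self]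
        exact hX₁W.ne (this.symm)
      · exact absurd hr12.symm (M.rank_lt_of_ssub (ssubset_of_subset_of_ne h he)).ne
    have hcommon₁₂ : ∀ a ∈ (X₁ : Set Ordinal) ∩ (X₂ : Set Ordinal),
        (X₁ : Set Ordinal) ∩ Set.Iio a = (X₂ : Set Ordinal) ∩ Set.Iio a :=
      fun a ha => hstar.common_Iio hne₁₂ ha
    have hcommon₂₁ : ∀ a ∈ (X₂ : Set Ordinal) ∩ (X₁ : Set Ordinal),
        (X₂ : Set Ordinal) ∩ Set.Iio a = (X₁ : Set Ordinal) ∩ Set.Iio a :=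
      fun a ha => (hstar.common_Iio hne₁₂ ⟨ha.2, ha.1⟩).symm
    have hIH₁ : ∀ X Y : M.mu, (X : Set Ordinal) ⊆ (X₁ : Set Ordinal) →
        (Y : Set Ordinal) ⊆ (X₁ : Set Ordinal) → M.wf.rank X ≤ M.wf.rank Y →
        ∀ α, α ∈ (X : Set Ordinal) → α ∈ (Y : Set Ordinal) →
          (X : Set Ordinal) ∩ Set.Iio α ⊆ (Y : Set Ordinal) :=
      fun X Y hX hY hXY α h1 h2 =>
        IH (M.wf.rank X₁) (hrank ▸ M.rank_lt_of_ssub hX₁W) X₁ X Y rfl hX hY hXY α h1 h2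
    have hIH₂ : ∀ X Y : M.mu, (X : Set Ordinal) ⊆ (X₂ : Set Ordinal) →
        (Y : Set Ordinal) ⊆ (X₂ : Set Ordinal) → M.wf.rank X ≤ M.wf.rank Y →
        ∀ α, α ∈ (X : Set Ordinal) → α ∈ (Y : Set Ordinal) →
          (X : Set Ordinal) ∩ Set.Iio α ⊆ (Y : Set Ordinal) :=
      fun X Y hX hY hXY α h1 h2 =>
        IH (M.wf.rank X₂) (hrank ▸ M.rank_lt_of_ssub hX₂W) X₂ X Y rfl hX hY hXY α h1 h2
    have hplace : ∀ Z : M.mu, (Z : Set Ordinal) ⊂ (W : Set Ordinal) →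
        (Z : Set Ordinal) ⊆ (X₁ : Set Ordinal) ∨ (Z : Set Ordinal) ⊆ (X₂ : Set Ordinal) := by
      intro Z hZ
      have : (Z : Set Ordinal) ∈ {Z | Z ∈ M.mu ∧ Z ⊂ (X₁ : Set Ordinal)} ∪
          {Z | Z ∈ M.mu ∧ Z ⊂ (X₂ : Set Ordinal)} ∪
          {(X₁ : Set Ordinal), (X₂ : Set Ordinal)} := by
        rw [← hpredeq]; exact ⟨Z.2, hZ⟩
      rcases this with (h | h) | h
      · exact Or.inl h.2.subset
      · exact Or.inr h.2.subset
      · rcases h with h | h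
        · exact Or.inl h.subset
        · exact Or.inr h.subset
    rcases hplace X hX with hX1 | hX2 <;> rcases hplace Y hY with hY1 | hY2
    · exact hIH₁ X Y hX1 hY1 hXY α hαX hαY
    · exact M.coh_mixed_aux X₁ X₂ hr12 hcommon₁₂ hIH₁ X Y hX1 hY2 hXY hαX hαY
    · exact M.coh_mixed_aux X₂ X₁ hr12.symm hcommon₂₁ hIH₂ X Y hX2 hY1 hXY hαX hαY
    · exact hIH₂ X Y hX2 hY2 hXY α hαX hαY

theorem coh {X Y : M.mu} (hXY : M.wf.rank X ≤ M.wf.rank Y) {α : Ordinal}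
    (hαX : α ∈ (X : Set Ordinal)) (hαY : α ∈ (Y : Set Ordinal)) :
    (X : Set Ordinal) ∩ Set.Iio α ⊆ (Y : Set Ordinal) := by
  obtain ⟨Z, hZmu, hXZ, hYZ⟩ := M.directed X.val X.2 Y.val Y.2
  exact M.coh_bounded (M.wf.rank ⟨Z, hZmu⟩) ⟨Z, hZmu⟩ X Y rfl hXZ hYZ hXY α hαX hαY

theorem coh_eq {X Y : M.mu} (hXY : M.wf.rank X = M.wf.rank Y) {α : Ordinal}
    (hαX : α ∈ (X : Set Ordinal)) (hαY : α ∈ (Y : Set Ordinal)) :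
    (X : Set Ordinal) ∩ Set.Iio α = (Y : Set Ordinal) ∩ Set.Iio α := by
  apply Set.Subset.antisymm
  · intro x hx
    exact ⟨M.coh hXY.le hαX hαY hx, hx.2⟩
  · intro x hx
    exact ⟨M.coh hXY.ge hαY hαX hx, hx.2⟩

end TwoCardinal

namespace TwoCardinal

variable {κ : Cardinal} (M : TwoCardinal κ)

set_option linter.deprecated false

theorem pred_of_predeq {W X₁ X₂ : M.mu}
    (hpredeq : {Z | Z ∈ M.mu ∧ Z ⊂ (W : Set Ordinal)} =
      {Z | Z ∈ M.mu ∧ Z ⊂ (X₁ : Set Ordinal)} ∪ {Z | Z ∈ M.mu ∧ Z ⊂ (X₂ : Set Ordinal)} ∪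
        {(X₁ : Set Ordinal), (X₂ : Set Ordinal)}) :
    (X₁ : Set Ordinal) ⊂ (W : Set Ordinal) ∧ (X₂ : Set Ordinal) ⊂ (W : Set Ordinal) := by
  constructor
  · have : (X₁ : Set Ordinal) ∈ {Z | Z ∈ M.mu ∧ Z ⊂ (W : Set Ordinal)} := by
      rw [hpredeq]; exact Or.inr (Set.mem_insert _ _)
    exact this.2
  · have : (X₂ : Set Ordinal) ∈ {Z | Z ∈ M.mu ∧ Z ⊂ (W : Set Ordinal)} := by
      rw [hpredeq]; exact Or.inr (Set.mem_insert_iff.2 (Or.inr rfl))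
    exact this.2

theorem rank_star {W X₁ X₂ : M.mu} (hr12 : M.wf.rank X₁ = M.wf.rank X₂)
    (hpredeq : {Z | Z ∈ M.mu ∧ Z ⊂ (W : Set Ordinal)} =
      {Z | Z ∈ M.mu ∧ Z ⊂ (X₁ : Set Ordinal)} ∪ {Z | Z ∈ M.mu ∧ Z ⊂ (X₂ : Set Ordinal)} ∪
        {(X₁ : Set Ordinal), (X₂ : Set Ordinal)}) :
    M.wf.rank W = Order.succ (M.wf.rank X₁) := by
  obtain ⟨h1, h2⟩ := M.pred_of_predeq hpredeq
  apply le_antisymm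
  · rw [M.wf.rank_eq]
    refine Ordinal.iSup_le_iff.2 ?_
    rintro ⟨Z, hZ⟩
    have : (Z : Set Ordinal) ∈ {Z | Z ∈ M.mu ∧ Z ⊂ (X₁ : Set Ordinal)} ∪
        {Z | Z ∈ M.mu ∧ Z ⊂ (X₂ : Set Ordinal)} ∪
        {(X₁ : Set Ordinal), (X₂ : Set Ordinal)} := by
      rw [← hpredeq]; exact ⟨Z.2, hZ⟩
    rcases this with (h | h) | h
    · exact ((Order.succ_le_iff.2 (M.rank_lt_of_ssub h.2)).trans (Order.le_succ _))
    · exact ((Order.succ_le_iff.2 (hr12 ▸ M.rank_lt_of_ssub h.2)).trans (Order.le_succ _))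
    · rcases h with h | h
      · have hz : Z = X₁ := Subtype.ext h
        exact le_of_eq (congrArg (fun t : M.mu => Order.succ (M.wf.rank t)) hz)
      · have hz : Z = X₂ := Subtype.ext h
        exact le_of_eq ((congrArg (fun t : M.mu => Order.succ (M.wf.rank t)) hz).trans
          (congrArg Order.succ hr12.symm))
  · exact Order.succ_le_iff.2 (M.rank_lt_of_ssub h1)

theorem exists_exact_rank : ∀ o : Ordinal.{1}, ∀ W : M.mu, M.wf.rank W = o →
    ∀ {α}, α ∈ (W : Set Ordinal) → ∀ {ν : Ordinal.{1}}, ν ≤ M.wf.rank W →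
    ∃ Z : M.mu, (Z : Set Ordinal) ⊆ (W : Set Ordinal) ∧ α ∈ (Z : Set Ordinal) ∧
      M.wf.rank Z = ν := by
  intro o
  induction o using Ordinal.induction with
  | _ o IH =>
  intro W hrank α hα ν hν
  rcases eq_or_lt_of_le hν with he | hlt
  · exact ⟨W, subset_rfl, hα, he.symm⟩
  have hne : M.wf.rank W ≠ 0 := by
    intro h
    exact absurd (h ▸ hlt) (not_lt_of_ge (zero_le (a := ν)))
  obtain ⟨S, hS, hαS⟩ : ∃ S ∈ {Z | Z ∈ M.mu ∧ Z ⊂ (W : Set Ordinal)}, α ∈ S := by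
    have := M.neat W hne
    rw [this] at hα
    exact hα
  rcases M.locAlmostDirected W with hdir | ⟨X₁, X₂, hr12, hstar, hpredeq⟩
  · obtain ⟨Z₃, hZ₃W, hZ₃⟩ := M.exists_pred_rank hlt
    obtain ⟨U, hUmu, hUW, hSU, hZ₃U⟩ := hdir S hS.1 Z₃.val Z₃.2 hS.2 hZ₃W
    have hr : ν ≤ M.wf.rank ⟨U, hUmu⟩ := hZ₃.trans (M.rank_mono (X := Z₃) hZ₃U)
    exact (IH (M.wf.rank ⟨U, hUmu⟩) (hrank ▸ M.rank_lt_of_ssub (Y := W) hUW)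
      ⟨U, hUmu⟩ rfl (hSU hαS) hr).imp
      fun Z ⟨h1, h2, h3⟩ => ⟨h1.trans hUW.subset, h2, h3⟩
  · obtain ⟨h1W, h2W⟩ := M.pred_of_predeq hpredeq
    have hrs := M.rank_star hr12 hpredeq
    have hν1 : ν ≤ M.wf.rank X₁ := Order.lt_succ_iff.1 (hrs ▸ hlt)
    have hα' : α ∈ (X₁ : Set Ordinal) ∪ (X₂ : Set Ordinal) := by
      rw [← hstar.2.1]; exact hα
    rcases hα' with hα1 | hα2
    · exact (IH (M.wf.rank X₁) (hrank ▸ M.rank_lt_of_ssub h1W) X₁ rfl hα1 hν1).imp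
        fun Z ⟨a, b, c⟩ => ⟨a.trans h1W.subset, b, c⟩
    · exact (IH (M.wf.rank X₂) (hrank ▸ M.rank_lt_of_ssub h2W) X₂ rfl hα2
        (hν1.trans hr12.le)).imp fun Z ⟨a, b, c⟩ => ⟨a.trans h2W.subset, b, c⟩

end TwoCardinal

namespace TwoCardinal

variable {κ : Cardinal} (M : TwoCardinal κ)

set_option linter.deprecated false

theorem witness_inside : ∀ o : Ordinal.{1}, ∀ X : M.mu, M.wf.rank X = o →
    ∀ {ξ α}, ξ ∈ (X : Set Ordinal) → α ∈ (X : Set Ordinal) →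
    ∀ Z : M.mu, ξ ∈ (Z : Set Ordinal) → α ∈ (Z : Set Ordinal) →
      M.wf.rank Z < M.wf.rank X →
    ∃ Z' : M.mu, (Z' : Set Ordinal) ⊂ (X : Set Ordinal) ∧ ξ ∈ (Z' : Set Ordinal) ∧
      α ∈ (Z' : Set Ordinal) ∧ M.wf.rank Z' ≤ M.wf.rank Z := by
  intro o
  induction o using Ordinal.induction with
  | _ o IH =>
  intro X hrank ξ α hξ hα Z hξZ hαZ hrk
  have hne : M.wf.rank X ≠ 0 := fun h => absurd (h ▸ hrk) (not_lt_of_ge zero_le)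
  have hneat := M.neat X hne
  obtain ⟨S₁, hS₁, hξS₁⟩ : ∃ S ∈ {Z | Z ∈ M.mu ∧ Z ⊂ (X : Set Ordinal)}, ξ ∈ S := by
    rw [hneat] at hξ; exact hξ
  obtain ⟨S₂, hS₂, hαS₂⟩ : ∃ S ∈ {Z | Z ∈ M.mu ∧ Z ⊂ (X : Set Ordinal)}, α ∈ S := by
    rw [hneat] at hα; exact hα
  rcases M.locAlmostDirected X with hdir | ⟨X₁, X₂, hr12, hstar, hpredeq⟩
  · obtain ⟨Z₃, hZ₃X, hZ₃⟩ := M.exists_pred_rank hrk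
    obtain ⟨U₁, hU₁mu, hU₁X, hS₁U, hS₂U⟩ := hdir S₁ hS₁.1 S₂ hS₂.1 hS₁.2 hS₂.2
    obtain ⟨U, hUmu, hUX, hU₁U, hZ₃U⟩ := hdir U₁ hU₁mu Z₃.val Z₃.2 hU₁X hZ₃X
    have hrU : M.wf.rank Z ≤ M.wf.rank ⟨U, hUmu⟩ := hZ₃.trans (M.rank_mono (X := Z₃) hZ₃U)
    rcases eq_or_lt_of_le hrU with he | hlt
    · exact ⟨⟨U, hUmu⟩, hUX, hU₁U (hS₁U hξS₁), hU₁U (hS₂U hαS₂), he.ge⟩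
    · obtain ⟨Z', h1, h2, h3, h4⟩ := IH (M.wf.rank ⟨U, hUmu⟩)
        (hrank ▸ M.rank_lt_of_ssub (Y := X) hUX) ⟨U, hUmu⟩ rfl
        (hU₁U (hS₁U hξS₁)) (hU₁U (hS₂U hαS₂)) Z hξZ hαZ hlt
      exact ⟨Z', h1.trans hUX, h2, h3, h4⟩
  · obtain ⟨h1X, h2X⟩ := M.pred_of_predeq hpredeq
    have hrs := M.rank_star hr12 hpredeq
    have hrk1 : M.wf.rank Z ≤ M.wf.rank X₁ := Order.lt_succ_iff.1 (hrs ▸ hrk)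
    have hξ' : ξ ∈ (X₁ : Set Ordinal) ∪ (X₂ : Set Ordinal) := by rw [← hstar.2.1]; exact hξ
    have hα' : α ∈ (X₁ : Set Ordinal) ∪ (X₂ : Set Ordinal) := by rw [← hstar.2.1]; exact hα
    have hcase : (ξ ∈ (X₁ : Set Ordinal) ∧ α ∈ (X₁ : Set Ordinal)) ∨
        (ξ ∈ (X₂ : Set Ordinal) ∧ α ∈ (X₂ : Set Ordinal)) := by
      rcases hξ' with hξ1 | hξ2 <;> rcases hα' with hα1 | hα2
      · exact Or.inl ⟨hξ1, hα1⟩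
      · by_cases h : ξ ∈ (X₂ : Set Ordinal)
        · exact Or.inr ⟨h, hα2⟩
        by_cases h' : α ∈ (X₁ : Set Ordinal)
        · exact Or.inl ⟨hξ1, h'⟩
        exfalso
        have hξα : ξ < α := hstar.2.2.2 ξ ⟨hξ1, h⟩ α ⟨hα2, h'⟩
        exact h (M.coh (X := Z) (Y := X₂) (hrk1.trans hr12.le) hαZ hα2 ⟨hξZ, hξα⟩)
      · by_cases h : ξ ∈ (X₁ : Set Ordinal)
        · exact Or.inl ⟨h, hα1⟩
        by_cases h' : α ∈ (X₂ : Set Ordinal)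
        · exact Or.inr ⟨hξ2, h'⟩
        exfalso
        have hαξ : α < ξ := hstar.2.2.2 α ⟨hα1, h'⟩ ξ ⟨hξ2, h⟩
        exact h' (M.coh (X := Z) (Y := X₂) (hrk1.trans hr12.le) hξZ hξ2 ⟨hαZ, hαξ⟩)
      · exact Or.inr ⟨hξ2, hα2⟩
    rcases hcase with ⟨hξ1, hα1⟩ | ⟨hξ2, hα2⟩
    · rcases eq_or_lt_of_le hrk1 with he | hlt
      · exact ⟨X₁, h1X, hξ1, hα1, he.ge⟩
      · obtain ⟨Z', h1, h2, h3, h4⟩ := IH (M.wf.rank X₁)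
          (hrank ▸ M.rank_lt_of_ssub h1X) X₁ rfl hξ1 hα1 Z hξZ hαZ hlt
        exact ⟨Z', h1.trans h1X, h2, h3, h4⟩
    · have hrk2 : M.wf.rank Z ≤ M.wf.rank X₂ := hrk1.trans hr12.le
      rcases eq_or_lt_of_le hrk2 with he | hlt
      · exact ⟨X₂, h2X, hξ2, hα2, he.ge⟩
      · obtain ⟨Z', h1, h2, h3, h4⟩ := IH (M.wf.rank X₂)
          (hrank ▸ M.rank_lt_of_ssub h2X) X₂ rfl hξ2 hα2 Z hξZ hαZ hlt
        exact ⟨Z', h1.trans h2X, h2, h3, h4⟩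

end TwoCardinal

namespace TwoCardinal

variable {κ : Cardinal} (M : TwoCardinal κ)

set_option linter.deprecated false


theorem pair_cover {a b : Ordinal} (ha : a < (Order.succ κ).ord) (hb : b < (Order.succ κ).ord) :
    ∃ X : M.mu, a ∈ (X : Set Ordinal) ∧ b ∈ (X : Set Ordinal) := by
  have ha' : a ∈ ⋃₀ M.mu := M.covers ▸ ha
  have hb' : b ∈ ⋃₀ M.mu := M.covers ▸ hb
  obtain ⟨S, hS, haS⟩ := ha'
  obtain ⟨T, hT, hbT⟩ := hb'
  obtain ⟨Z, hZ, hSZ, hTZ⟩ := M.directed S hS T hT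
  exact ⟨⟨Z, hZ⟩, hSZ haS, hTZ hbT⟩

theorem mcol_witness {a b : Ordinal} (ha : a < (Order.succ κ).ord)
    (hb : b < (Order.succ κ).ord) :
    ∃ X : M.mu, M.rank X = M.mcol a b ∧ a ∈ (X : Set Ordinal) ∧ b ∈ (X : Set Ordinal) := by
  have hne : {ξ | ∃ X : M.mu, M.rank X = ξ ∧ a ∈ (X : Set Ordinal) ∧
      b ∈ (X : Set Ordinal)}.Nonempty := by
    obtain ⟨X, h1, h2⟩ := M.pair_cover ha hb
    exact ⟨M.rank X, X, rfl, h1, h2⟩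
  obtain ⟨X, h1, h2, h3⟩ := csInf_mem hne
  exact ⟨X, h1, h2, h3⟩

theorem mcol_le {a b : Ordinal} (X : M.mu) (ha : a ∈ (X : Set Ordinal))
    (hb : b ∈ (X : Set Ordinal)) : M.mcol a b ≤ M.rank X :=
  csInf_le (OrderBot.bddBelow _) ⟨X, rfl, ha, hb⟩

theorem mcol_lt_ord (hκ : κ.IsRegular) {a b : Ordinal} (ha : a < (Order.succ κ).ord)
    (hb : b < (Order.succ κ).ord) : M.mcol a b < κ.ord := by
  obtain ⟨X, h1, -, -⟩ := M.mcol_witness ha hb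
  exact h1 ▸ M.rank_lt_ord hκ X

end TwoCardinal

namespace TwoCardinal

variable {κ : Cardinal} (M : TwoCardinal κ)

set_option linter.deprecated false

theorem level_key_le (hκ : κ.IsRegular) {β α α' : Ordinal} (hβα : β < α) (hβα' : β < α')
    (hα : α < (Order.succ κ).ord) (hα' : α' < (Order.succ κ).ord)
    (hβ : β < (Order.succ κ).ord)
    (X X' : M.mu) (hXr : M.rank X = M.mcol β α) (hβX : β ∈ (X : Set Ordinal))
    (hαX : α ∈ (X : Set Ordinal))
    (hX'r : M.rank X' = M.mcol β α') (hβX' : β ∈ (X' : Set Ordinal))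
    (hαX' : α' ∈ (X' : Set Ordinal))
    (hρ : M.mcol β α = M.mcol β α')
    (hpos : oType ((X : Set Ordinal) ∩ Set.Iio α) = oType ((X' : Set Ordinal) ∩ Set.Iio α')) :
    ∀ ξ < β, M.mcol ξ α' ≤ M.mcol ξ α := by
  intro ξ hξ
  have hξδ : ξ < (Order.succ κ).ord := hξ.trans hβ
  obtain ⟨Z, hZr, hξZ, hαZ⟩ := M.mcol_witness hξδ hα
  have hrXX' : M.wf.rank X = M.wf.rank X' :=
    (M.rank_eq_rank_iff hκ).1 (hXr.trans (hρ.trans hX'r.symm))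
  rcases le_or_gt (M.wf.rank X) (M.wf.rank Z) with hge | hlt
  · have hβZ : β ∈ (Z : Set Ordinal) := M.coh hge hαX hαZ ⟨hβX, hβα⟩
    obtain ⟨U, hUmu, hZU, hX'U⟩ := M.directed Z.val Z.2 X'.val X'.2
    have hνU : M.wf.rank Z ≤ M.wf.rank ⟨U, hUmu⟩ := M.rank_mono (X := Z) hZU
    obtain ⟨V, hVU, hα'V, hVr⟩ := M.exists_exact_rank (M.wf.rank ⟨U, hUmu⟩) ⟨U, hUmu⟩ rfl
      (hX'U hαX') hνU
    have hβV : β ∈ (V : Set Ordinal) :=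
      M.coh (X := X') (Y := V) (hVr ▸ (hrXX' ▸ hge)) hαX' hα'V ⟨hβX', hβα'⟩
    have hξV : ξ ∈ (V : Set Ordinal) := by
      have hh := M.coh_eq (X := Z) (Y := V) hVr.symm hβZ hβV
      have : ξ ∈ (V : Set Ordinal) ∩ Set.Iio β := hh ▸ (⟨hξZ, hξ⟩ :
        ξ ∈ (Z : Set Ordinal) ∩ Set.Iio β)
      exact this.1
    calc M.mcol ξ α' ≤ M.rank V := M.mcol_le V hξV hα'V
      _ = M.rank Z := (M.rank_eq_rank_iff hκ).2 hVr
      _ = M.mcol ξ α := hZr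
  · have hξX : ξ ∈ (X : Set Ordinal) := M.coh hlt.le hαZ hαX ⟨hξZ, hξ.trans hβα⟩
    obtain ⟨Z', hZ'X, hξZ', hαZ', hZ'r⟩ := M.witness_inside (M.wf.rank X) X rfl hξX hαX
      Z hξZ hαZ hlt
    have himg := M.image_mem hrXX' ⟨Z'.2, hZ'X⟩
    have hcomβ : (X : Set Ordinal) ∩ Set.Iio β = (X' : Set Ordinal) ∩ Set.Iio β :=
      M.coh_eq hrXX' hβX hβX'
    have hξX' : ξ ∈ (X' : Set Ordinal) := by
      have : ξ ∈ (X' : Set Ordinal) ∩ Set.Iio β := hcomβ ▸ (⟨hξX, hξ⟩ :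
        ξ ∈ (X : Set Ordinal) ∩ Set.Iio β)
      exact this.1
    have hcomξ : (X : Set Ordinal) ∩ Set.Iio ξ = (X' : Set Ordinal) ∩ Set.Iio ξ := by
      ext x
      constructor
      · rintro ⟨h1, h2⟩
        have : x ∈ (X' : Set Ordinal) ∩ Set.Iio β := hcomβ ▸ (⟨h1, h2.trans hξ⟩ :
          x ∈ (X : Set Ordinal) ∩ Set.Iio β)
        exact ⟨this.1, h2⟩
      · rintro ⟨h1, h2⟩
        have : x ∈ (X : Set Ordinal) ∩ Set.Iio β := hcomβ.symm ▸ (⟨h1, h2.trans hξ⟩ :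
          x ∈ (X' : Set Ordinal) ∩ Set.Iio β)
        exact ⟨this.1, h2⟩
    have hfξ : omap (X : Set Ordinal) (X' : Set Ordinal) ξ = ξ :=
      omap_eq_of (M.sub_delta X) (M.sub_delta X') hξX' (by rw [hcomξ])
    have hfα : omap (X : Set Ordinal) (X' : Set Ordinal) α = α' :=
      omap_eq_of (M.sub_delta X) (M.sub_delta X') hαX' hpos.symm
    have hrkimg := M.rank_image hrXX' Z' hZ'X himg.1
    calc M.mcol ξ α' ≤ M.rank ⟨_, himg.1⟩ :=
          M.mcol_le _ ⟨ξ, hξZ', hfξ⟩ ⟨α, hαZ', hfα⟩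
      _ = M.rank Z' := (M.rank_eq_rank_iff hκ).2 hrkimg
      _ ≤ M.rank Z := (M.rank_le_rank_iff hκ).2 hZ'r
      _ = M.mcol ξ α := hZr

theorem level_key (hκ : κ.IsRegular) {β α α' : Ordinal} (hβα : β < α) (hβα' : β < α')
    (hα : α < (Order.succ κ).ord) (hα' : α' < (Order.succ κ).ord)
    (hβ : β < (Order.succ κ).ord)
    (X X' : M.mu) (hXr : M.rank X = M.mcol β α) (hβX : β ∈ (X : Set Ordinal))
    (hαX : α ∈ (X : Set Ordinal))
    (hX'r : M.rank X' = M.mcol β α') (hβX' : β ∈ (X' : Set Ordinal))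
    (hαX' : α' ∈ (X' : Set Ordinal))
    (hρ : M.mcol β α = M.mcol β α')
    (hpos : oType ((X : Set Ordinal) ∩ Set.Iio α) = oType ((X' : Set Ordinal) ∩ Set.Iio α')) :
    ∀ ξ < β, M.mcol ξ α = M.mcol ξ α' := by
  intro ξ hξ
  exact le_antisymm
    (M.level_key_le hκ hβα' hβα hα' hα hβ X' X hX'r hβX' hαX' hXr hβX hαX hρ.symm hpos.symm ξ hξ)
    (M.level_key_le hκ hβα hβα' hα hα' hβ X X' hXr hβX hαX hX'r hβX' hαX' hρ hpos ξ hξ)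

end TwoCardinal

namespace TwoCardinal

variable {κ : Cardinal} (M : TwoCardinal κ)

set_option linter.deprecated false

theorem mem_card_lt (hκ : κ.IsRegular) (X : M.mu) : #(X : Set Ordinal) < Cardinal.lift.{1} κ := by
  have h1 : #(X : Set Ordinal) = (oType (X : Set Ordinal)).card := (Ordinal.card_type _).symm
  rw [h1, ← lift_otp (M.sub_delta X), ← Ordinal.lift_card, Cardinal.lift_lt]
  exact M.mem_small X.1 X.2

theorem slice_small (hκ : κ.IsRegular) {α β ρ : Ordinal} (hα : α < (Order.succ κ).ord)
    (hβα : β ≤ α) (hρ : ρ < κ.ord) :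
    #{ξ : Ordinal | ξ < β ∧ M.mcol ξ α ≤ ρ} < Cardinal.lift.{1} κ := by
  have hℵ : ℵ₀ ≤ Cardinal.lift.{1} κ := by
    rw [← Cardinal.lift_aleph0.{1,0}]; exact Cardinal.lift_le.2 hκ.aleph0_le
  have hlim : Order.IsSuccLimit κ.ord := Cardinal.isSuccLimit_ord hκ.aleph0_le
  have hcof : ((Cardinal.lift.{1} κ).ord).cof = Cardinal.lift.{1} κ := by
    rw [← Cardinal.lift_ord.{1,0}, ← Ordinal.lift_cof, hκ.cof_eq]
  set F : ↥(Set.Iic ρ) → Set Ordinal := fun ν =>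
    ⋃₀ {S | ∃ X : M.mu, M.rank X = ν.1 ∧ α ∈ (X : Set Ordinal) ∧
      S = (X : Set Ordinal) ∩ Set.Iio α} with hF
  have hsub : {ξ : Ordinal | ξ < β ∧ M.mcol ξ α ≤ ρ} ⊆ ⋃ ν, F ν := by
    intro ξ ⟨hξβ, hξρ⟩
    obtain ⟨X, hXr, hξX, hαX⟩ := M.mcol_witness ((hξβ.trans_le hβα).trans hα) hα
    refine Set.mem_iUnion.2 ⟨⟨M.mcol ξ α, hξρ⟩, ?_⟩
    exact ⟨(X : Set Ordinal) ∩ Set.Iio α, ⟨X, hXr, hαX, rfl⟩, ⟨hξX, hξβ.trans_le hβα⟩⟩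
  have hFsmall : ∀ ν, #(F ν) < Cardinal.lift.{1} κ := by
    intro ν
    by_cases h : ∃ X : M.mu, M.rank X = ν.1 ∧ α ∈ (X : Set Ordinal)
    · obtain ⟨X₀, hX₀r, hαX₀⟩ := h
      have : F ν ⊆ (X₀ : Set Ordinal) := by
        refine Set.sUnion_subset ?_
        rintro S ⟨X, hXr, hαX, rfl⟩
        have : (X : Set Ordinal) ∩ Set.Iio α = (X₀ : Set Ordinal) ∩ Set.Iio α :=
          M.coh_eq ((M.rank_eq_rank_iff hκ).1 (hXr.trans hX₀r.symm)) hαX hαX₀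
        rw [this]
        exact Set.inter_subset_left
      exact (Cardinal.mk_le_mk_of_subset this).trans_lt (M.mem_card_lt hκ X₀)
    · have : F ν = ∅ := by
        rw [hF]
        simp only [Set.sUnion_eq_empty]
        rintro S ⟨X, hXr, hαX, rfl⟩
        exact absurd ⟨X, hXr, hαX⟩ h
      rw [this, Cardinal.mk_emptyCollection]
      exact aleph0_pos.trans_le hℵ
  have hidx : #(↥(Set.Iic ρ)) < Cardinal.lift.{1} κ := by
    have h1 : Set.Iic ρ ⊆ Set.Iio (ρ + 1) := by
      intro x hx
      rw [Set.mem_Iio, Ordinal.add_one_eq_succ]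
      exact Order.lt_succ_iff.2 hx
    refine (Cardinal.mk_le_mk_of_subset h1).trans_lt ?_
    rw [Ordinal.mk_Iio_ordinal, Cardinal.lift_lt]
    exact Cardinal.lt_ord.1 (hlim.succ_lt hρ)
  calc #{ξ : Ordinal | ξ < β ∧ M.mcol ξ α ≤ ρ} ≤ #(⋃ ν, F ν) :=
        Cardinal.mk_le_mk_of_subset hsub
    _ ≤ #(↥(Set.Iic ρ)) * ⨆ ν, #(F ν) := Cardinal.mk_iUnion_le F
    _ < Cardinal.lift.{1} κ := Cardinal.mul_lt_of_lt hℵ hidx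
        (Ordinal.iSup_lt (by rw [hcof]; exact hidx) hFsmall)

end TwoCardinal

namespace TwoCardinal

variable {κ : Cardinal} (M : TwoCardinal κ)

set_option linter.deprecated false

theorem pos_lt_ord (hκ : κ.IsRegular) (X : M.mu) (α : Ordinal) :
    otp ((X : Set Ordinal) ∩ Set.Iio α) < κ.ord := by
  refine Cardinal.lt_ord.2 (lt_of_le_of_lt (Ordinal.card_le_card ?_) (M.mem_small X.1 X.2))
  rw [← Ordinal.lift_le.{1}, lift_otp (Set.inter_subset_left.trans (M.sub_delta X)),
    lift_otp (M.sub_delta X)]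
  exact oType_le_oType_of_subset Set.inter_subset_left

theorem level_small (hκ : κ.IsRegular) {β : Ordinal} (hβ : β < (Order.succ κ).ord)
    (Tset : Set (Ordinal → Ordinal))
    (hT : Tset = {t | ∃ α : Ordinal, β < α ∧ α < (Order.succ κ).ord ∧
      t = fun ξ => if ξ < β then M.mcol ξ α else 0}) :
    Cardinal.mk Tset ≤ Cardinal.lift.{1} κ := by
  have hsel : ∀ t : ↥Tset, ∃ α : Ordinal, β < α ∧ α < (Order.succ κ).ord ∧
      (t : Ordinal → Ordinal) = fun ξ => if ξ < β then M.mcol ξ α else 0 := by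
    rintro ⟨t, ht⟩
    rw [hT] at ht
    exact ht
  choose a ha1 ha2 ha3 using hsel
  have hwit : ∀ t : ↥Tset, ∃ X : M.mu, M.rank X = M.mcol β (a t) ∧
      β ∈ (X : Set Ordinal) ∧ a t ∈ (X : Set Ordinal) := fun t => M.mcol_witness hβ (ha2 t)
  choose Xf hX1 hX2 hX3 using hwit
  set g : ↥Tset → ↥(Set.Iio κ.ord) × ↥(Set.Iio κ.ord) := fun t =>
    (⟨M.mcol β (a t), M.mcol_lt_ord hκ hβ (ha2 t)⟩,
     ⟨otp ((Xf t : Set Ordinal) ∩ Set.Iio (a t)), M.pos_lt_ord hκ (Xf t) (a t)⟩) with hg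
  have ginj : Function.Injective g := by
    intro t t' he
    have h1 : M.mcol β (a t) = M.mcol β (a t') := congrArg (fun p => (p.1 : Ordinal)) he
    have h2 : otp ((Xf t : Set Ordinal) ∩ Set.Iio (a t)) =
        otp ((Xf t' : Set Ordinal) ∩ Set.Iio (a t')) := congrArg (fun p => (p.2 : Ordinal)) he
    have hpos : oType ((Xf t : Set Ordinal) ∩ Set.Iio (a t)) =
        oType ((Xf t' : Set Ordinal) ∩ Set.Iio (a t')) := by
      rw [← lift_otp (Set.inter_subset_left.trans (M.sub_delta (Xf t))),
        ← lift_otp (Set.inter_subset_left.trans (M.sub_delta (Xf t'))), h2]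
    have hkey := M.level_key hκ (ha1 t) (ha1 t') (ha2 t) (ha2 t') hβ (Xf t) (Xf t')
      (hX1 t) (hX2 t) (hX3 t) (hX1 t') (hX2 t') (hX3 t') h1 hpos
    apply Subtype.ext
    rw [ha3 t, ha3 t']
    funext ξ
    by_cases hξ : ξ < β
    · rw [if_pos hξ, if_pos hξ, hkey ξ hξ]
    · rw [if_neg hξ, if_neg hξ]
  calc #Tset ≤ #(↥(Set.Iio κ.ord) × ↥(Set.Iio κ.ord)) := Cardinal.mk_le_of_injective ginj
    _ = Cardinal.lift.{1} κ := by
        rw [Cardinal.mk_prod, Ordinal.mk_Iio_ordinal, Cardinal.card_ord]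
        simp only [Cardinal.lift_id]
        exact Cardinal.mul_eq_self (by
          rw [← Cardinal.lift_aleph0.{1,0}]; exact Cardinal.lift_le.2 hκ.aleph0_le)

theorem bounded_small (hκ : κ.IsRegular) {A : Set Ordinal}
    (hA : A ⊆ Set.Iio (Order.succ κ).ord)
    (h : ∀ β < (Order.succ κ).ord, #(A ∩ Set.Iio β : Set Ordinal) < Cardinal.lift.{1} κ) :
    Cardinal.mk A < Cardinal.lift.{1} κ := by
  by_contra hge
  push_neg at hge
  obtain ⟨T', hT'sub, hT'card⟩ := Cardinal.le_mk_iff_exists_subset.1 hge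
  haveI : Small.{0} ↥T' := small_subset (hT'sub.trans hA)
  have hδlim : Order.IsSuccLimit ((Order.succ κ).ord) :=
    Cardinal.isSuccLimit_ord (hκ.aleph0_le.trans (Order.le_succ κ))
  have hcard : #(Shrink.{0} ↥T') = κ := by
    have hs := Cardinal.lift_mk_shrink''.{1, 0} ↥T'
    rw [hT'card] at hs
    exact Cardinal.lift_injective hs
  set f : Shrink.{0} ↥T' → Ordinal := fun i => (((equivShrink ↥T').symm i : ↥T') : Ordinal)
    with hf
  have hsup : (⨆ i, f i) < (Order.succ κ).ord := by
    refine Ordinal.iSup_lt_ord ?_ fun i => hA (hT'sub ((equivShrink ↥T').symm i).2)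
    rw [hcard, (Cardinal.isRegular_succ hκ.aleph0_le).cof_eq]
    exact Order.lt_succ κ
  have hβδ : Order.succ (⨆ i, f i) < (Order.succ κ).ord := hδlim.succ_lt hsup
  have hsubβ : T' ⊆ A ∩ Set.Iio (Order.succ (⨆ i, f i)) := by
    intro x hx
    refine ⟨hT'sub hx, ?_⟩
    have hle : x ≤ ⨆ i, f i := by
      have := Ordinal.le_iSup f (equivShrink ↥T' ⟨x, hx⟩)
      simpa [hf] using this
    exact Order.lt_succ_iff.2 hle
  exact absurd (hT'card ▸ Cardinal.mk_le_mk_of_subset hsubβ)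
    (not_le.2 (h _ hβδ))

end TwoCardinal


/-- The tree of restrictions `{m(·,α)↾β : β < α < κ⁺}` of the μ-coloring is a
`κ⁺`-Aronszajn tree: all `κ⁺` levels are nonempty, of size at most `κ`, and there is no
branch of length `κ⁺`. -/
theorem aronszajn_tree (κ : Cardinal) (hκ : κ.IsRegular) (M : TwoCardinal κ)
    (T : Ordinal → Set (Ordinal → Ordinal))
    (hT : ∀ β, T β = {t | ∃ α : Ordinal, β < α ∧ α < (Order.succ κ).ord ∧
      t = fun ξ => if ξ < β then M.mcol ξ α else 0}) :
    (∀ β : Ordinal, β < (Order.succ κ).ord → (T β).Nonempty) ∧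
    (∀ β : Ordinal, β < (Order.succ κ).ord → #(T β) ≤ Cardinal.lift.{1} κ) ∧
    ¬ ∃ b : Ordinal → Ordinal, ∀ β : Ordinal, β < (Order.succ κ).ord →
      (fun ξ => if ξ < β then b ξ else 0) ∈ T β := by
  have hℵ : ℵ₀ ≤ Cardinal.lift.{1} κ := by
    rw [← Cardinal.lift_aleph0.{1,0}]; exact Cardinal.lift_le.2 hκ.aleph0_le
  have hδlim : Order.IsSuccLimit ((Order.succ κ).ord) :=
    Cardinal.isSuccLimit_ord (hκ.aleph0_le.trans (Order.le_succ κ))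
  refine ⟨?_, ?_, ?_⟩
  · intro β hβ
    refine ⟨fun ξ => if ξ < β then M.mcol ξ (Order.succ β) else 0, ?_⟩
    rw [hT]
    exact ⟨Order.succ β, Order.lt_succ β, hδlim.succ_lt hβ, rfl⟩
  · intro β hβ
    exact M.level_small hκ hβ (T β) (hT β)
  · rintro ⟨b, hb⟩
    have hsel : ∀ β : Ordinal, β < (Order.succ κ).ord → ∃ α, β < α ∧ α < (Order.succ κ).ord ∧
        ∀ ξ < β, b ξ = M.mcol ξ α := by
      intro β hβ
      have hmem := hb β hβ
      rw [hT] at hmem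
      obtain ⟨α, h1, h2, h3⟩ := hmem
      refine ⟨α, h1, h2, fun ξ hξ => ?_⟩
      have h4 := congrFun h3 ξ
      rwa [if_pos hξ, if_pos hξ] at h4
    choose! af haf1 haf2 haf3 using hsel
    have hbval : ∀ ξ, ξ < (Order.succ κ).ord → b ξ < κ.ord := by
      intro ξ hξ
      have hsβ : Order.succ ξ < (Order.succ κ).ord := hδlim.succ_lt hξ
      rw [haf3 (Order.succ ξ) hsβ ξ (Order.lt_succ ξ)]
      exact M.mcol_lt_ord hκ hξ (haf2 _ hsβ)
    set S : Ordinal → Set Ordinal := fun ρ => {ξ | ξ < (Order.succ κ).ord ∧ b ξ = ρ} with hS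
    have hSsmall : ∀ ρ, #(S ρ) < Cardinal.lift.{1} κ := by
      intro ρ
      by_cases hρ : ρ < κ.ord
      · apply TwoCardinal.bounded_small (κ := κ) hκ (fun ξ hξ => hξ.1)
        intro β hβ
        have hsub : S ρ ∩ Set.Iio β ⊆ {ξ | ξ < β ∧ M.mcol ξ (af β) ≤ ρ} := by
          rintro ξ ⟨⟨hξδ, hξρ⟩, hξβ⟩
          exact ⟨hξβ, by rw [← haf3 β hβ ξ hξβ, hξρ]⟩
        exact (Cardinal.mk_le_mk_of_subset hsub).trans_lt
          (M.slice_small hκ (haf2 β hβ) (haf1 β hβ).le hρ)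
      · have hempty : S ρ = ∅ := by
          ext ξ
          simp only [Set.mem_empty_iff_false, iff_false]
          rintro ⟨h1, h2⟩
          exact hρ (h2 ▸ hbval ξ h1)
        rw [hempty, Cardinal.mk_emptyCollection]
        exact aleph0_pos.trans_le hℵ
    have hcover : Set.Iio (Order.succ κ).ord ⊆ ⋃ ρ : ↥(Set.Iio κ.ord), S ρ.1 := by
      intro ξ hξ
      exact Set.mem_iUnion.2 ⟨⟨b ξ, hbval ξ hξ⟩, hξ, rfl⟩
    haveI : Nonempty ↥(Set.Iio κ.ord) :=
      ⟨⟨0, (Cardinal.isSuccLimit_ord hκ.aleph0_le).pos⟩⟩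
    have hbig : Cardinal.lift.{1} (Order.succ κ) ≤ Cardinal.lift.{1} κ := by
      have h1 : #(Set.Iio (Order.succ κ).ord) = Cardinal.lift.{1} (Order.succ κ) := by
        rw [Ordinal.mk_Iio_ordinal, Cardinal.card_ord]
      rw [← h1]
      calc #(Set.Iio (Order.succ κ).ord) ≤ #(⋃ ρ : ↥(Set.Iio κ.ord), S ρ.1) :=
            Cardinal.mk_le_mk_of_subset hcover
        _ ≤ #(↥(Set.Iio κ.ord)) * ⨆ ρ : ↥(Set.Iio κ.ord), #(S ρ.1) :=
            Cardinal.mk_iUnion_le _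
        _ ≤ Cardinal.lift.{1} κ * Cardinal.lift.{1} κ := by
            refine mul_le_mul' (le_of_eq ?_) (ciSup_le' fun ρ => (hSsmall ρ.1).le)
            rw [Ordinal.mk_Iio_ordinal, Cardinal.card_ord]
        _ = Cardinal.lift.{1} κ := Cardinal.mul_eq_self hℵ
    exact absurd (Cardinal.lift_le.1 hbig) (not_le.2 (Order.lt_succ κ))
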